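/- Let r, d1, d2 be positive integers with gcd(d1, r) = gcd(d2, r) = 1, and let m1, m2 be integers. Then Σ_{χ mod r} χ(d1²) · conj(χ)(d2²) · G_χ(1) · G_χ(m1²) · G_{conj(χ)}(1) · G_{conj(χ)}(m2²) = φ(r) · Σ_{u mod r, gcd(u,r)=1} R(u + m1²d2², r) · R(u + m2²d1², r), where the first sum runs over all Dirichlet characters χ modulo r. -/

import Mathlib

/-- `e(x/q)`-type additive character: for `x : ZMod q`, `eZMod q x = exp(2πi·x/q)`. -/
noncomputable def eZMod (q : ℕ) (x : ZMod q) : ℂ :=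
  Complex.exp (2 * Real.pi * Complex.I * (x.val : ℂ) / (q : ℂ))

/-- Kloosterman sum `S(m, n; q) = Σ_{d mod q, gcd(d,q)=1} e((m·d + n·d⁻¹)/q)`. -/
noncomputable def kloostermanS (q : ℕ) (m n : ZMod q) : ℂ :=
  ∑ d ∈ (Finset.range q).filter (fun d => Nat.gcd d q = 1),
    eZMod q (m * (d : ZMod q) + n * ((d : ZMod q)⁻¹))

/-- Gauss sum `G_χ(n) = Σ_{a mod q} χ(a) e(a·n/q)`. -/
noncomputable def gaussS (q : ℕ) (χ : DirichletCharacter ℂ q) (n : ZMod q) : ℂ :=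
  ∑ a ∈ Finset.range q, χ (a : ZMod q) * eZMod q ((a : ZMod q) * n)

/-- Ramanujan sum `R(n, q) = Σ_{a mod q, gcd(a,q)=1} e(a·n/q)`. -/
noncomputable def ramanujanS (q : ℕ) (n : ZMod q) : ℂ :=
  ∑ a ∈ (Finset.range q).filter (fun a => Nat.gcd a q = 1), eZMod q ((a : ZMod q) * n)

lemma eZMod_add (q : ℕ) [NeZero q] (x y : ZMod q) :
    eZMod q (x + y) = eZMod q x * eZMod q y := by
  unfold eZMod
  rw [← Complex.exp_add]
  have hq : (q : ℂ) ≠ 0 := by exact_mod_cast (NeZero.ne q)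
  have key : x.val + y.val = q * ((x.val + y.val) / q) + (x + y).val := by
    rw [ZMod.val_add]; exact (Nat.div_add_mod _ _).symm
  rw [show 2 * Real.pi * Complex.I * (x.val : ℂ) / q + 2 * Real.pi * Complex.I * (y.val : ℂ) / q
      = 2 * Real.pi * Complex.I * ((x.val + y.val : ℕ) : ℂ) / q by push_cast; ring]
  rw [key]
  push_cast
  rw [show 2 * Real.pi * Complex.I * ((q : ℂ) * ((x.val + y.val) / q : ℕ) + ((x+y).val : ℕ)) / q
      = (((x.val + y.val) / q : ℕ) : ℂ) * (2 * Real.pi * Complex.I) + 2 * Real.pi * Complex.I * (((x+y).val : ℕ) : ℂ) / q by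
        field_simp]
  rw [Complex.exp_add, Complex.exp_nat_mul_two_pi_mul_I, one_mul]

lemma sum_range_zmod (q : ℕ) [NeZero q] (f : ZMod q → ℂ) :
    ∑ i ∈ Finset.range q, f (i : ZMod q) = ∑ a : ZMod q, f a := by
  refine Finset.sum_nbij' (fun i => (i : ZMod q)) (fun a => a.val) ?_ ?_ ?_ ?_ ?_
  · intro i _; exact Finset.mem_univ _
  · intro a _; exact Finset.mem_range.mpr (ZMod.val_lt a)
  · intro i hi; exact ZMod.val_cast_of_lt (Finset.mem_range.mp hi)
  · intro a _; simp
  · intro i _; rfl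

lemma sum_units_eq {q : ℕ} [NeZero q] (g : ZMod q → ℂ) (h : ∀ a : ZMod q, ¬IsUnit a → g a = 0) :
    ∑ a : ZMod q, g a = ∑ u : (ZMod q)ˣ, g ↑u := by
  classical
  have h1 : ∑ a ∈ Finset.univ.filter (fun a : ZMod q => IsUnit a), g a = ∑ a : ZMod q, g a :=
    Finset.sum_filter_of_ne (fun x _ hx => by by_contra hc; exact hx (h x hc))
  rw [← h1]
  refine Finset.sum_nbij' (fun a : ZMod q => if h : IsUnit a then h.unit else 1)
    (fun u : (ZMod q)ˣ => (u : ZMod q)) ?_ ?_ ?_ ?_ ?_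
  · intro a ha; exact Finset.mem_univ _
  · intro u _; simp [Finset.mem_filter]
  · intro a ha
    have hu : IsUnit a := (Finset.mem_filter.mp ha).2
    simp [hu, hu.unit_spec]
  · intro u _
    have hu : IsUnit ((u : ZMod q)) := u.isUnit
    simp only [hu, dif_pos]
    exact Units.ext hu.unit_spec
  · intro a ha
    have hu : IsUnit a := (Finset.mem_filter.mp ha).2
    simp [hu, hu.unit_spec]

lemma sum_filter_units (q : ℕ) [NeZero q] (f : ZMod q → ℂ) :
    ∑ i ∈ (Finset.range q).filter (fun i => Nat.gcd i q = 1), f (i : ZMod q)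
      = ∑ u : (ZMod q)ˣ, f ↑u := by
  classical
  rw [Finset.sum_filter]
  have : ∀ i ∈ Finset.range q, (if Nat.gcd i q = 1 then f (i : ZMod q) else 0)
      = (fun a : ZMod q => if IsUnit a then f a else 0) (i : ZMod q) := by
    intro i _
    by_cases hgcd : Nat.gcd i q = 1
    · simp only [if_pos hgcd, if_pos ((ZMod.isUnit_iff_coprime i q).mpr hgcd)]
    · simp only [if_neg hgcd, if_neg (fun hu => hgcd ((ZMod.isUnit_iff_coprime i q).mp hu))]
  rw [Finset.sum_congr rfl this,
    sum_range_zmod q (fun a : ZMod q => if IsUnit a then f a else 0)]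
  rw [sum_units_eq _ (fun a ha => if_neg ha)]
  exact Finset.sum_congr rfl (fun u _ => if_pos u.isUnit)

lemma gaussS_units (r : ℕ) [NeZero r] (χ : DirichletCharacter ℂ r) (n : ZMod r) :
    gaussS r χ n = ∑ u : (ZMod r)ˣ, χ ↑u * eZMod r (↑u * n) := by
  unfold gaussS
  rw [sum_range_zmod r (fun a : ZMod r => χ a * eZMod r (a * n))]
  exact sum_units_eq _ (fun a ha => by rw [χ.map_nonunit ha, zero_mul])

lemma ramanujanS_units (r : ℕ) [NeZero r] (n : ZMod r) :
    ramanujanS r n = ∑ u : (ZMod r)ˣ, eZMod r (↑u * n) :=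
  sum_filter_units r (fun a : ZMod r => eZMod r (a * n))

lemma conj_char {r : ℕ} [NeZero r] (χ : DirichletCharacter ℂ r) (u : (ZMod r)ˣ) :
    (starRingEnd ℂ) (χ ↑u) = χ ↑(u⁻¹) := by
  have hnorm : ‖χ ↑u‖ = 1 := χ.unit_norm_eq_one u
  have hinv : (χ ↑u)⁻¹ = (starRingEnd ℂ) (χ ↑u) := Complex.inv_eq_conj hnorm
  rw [← hinv]
  have h : χ ↑u * χ ↑(u⁻¹) = 1 := by
    rw [← map_mul, ← Units.val_mul, mul_inv_cancel, Units.val_one, map_one]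
  exact inv_eq_of_mul_eq_one_right h

lemma orth_units {r : ℕ} [NeZero r] (x y : (ZMod r)ˣ) :
    ∑ χ : DirichletCharacter ℂ r, χ ↑x * (starRingEnd ℂ) (χ ↑y)
      = if x = y then (r.totient : ℂ) else 0 := by
  have : ∀ χ : DirichletCharacter ℂ r, χ ↑x * (starRingEnd ℂ) (χ ↑y)
      = χ ((↑y : ZMod r))⁻¹ * χ ↑x := by
    intro χ
    rw [conj_char, mul_comm]
    congr 1
    congr 1
    exact (ZMod.inv_coe_unit y).symm ▸ rfl
  rw [Finset.sum_congr rfl (fun χ _ => this χ)]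
  rw [DirichletCharacter.sum_char_inv_mul_char_eq ℂ y.isUnit (↑x)]
  by_cases h : x = y
  · simp [h]
  · rw [if_neg h, if_neg (fun hc => h (Units.ext hc.symm))]

/-- For positive `r, d1, d2` with `(d1, r) = (d2, r) = 1` and integers
`m1, m2`: `Σ_{χ mod r} χ(d1²) conj(χ)(d2²) G_χ(1) G_χ(m1²) G_{conj(χ)}(1) G_{conj(χ)}(m2²)
  = φ(r) Σ_{u mod r, (u,r)=1} R(u + m1²d2², r) R(u + m2²d1², r)`. -/
theorem stmt8 (r d1 d2 : ℕ) (hr : 0 < r) [NeZero r] (hd1 : 0 < d1) (hd2 : 0 < d2)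
    (h1 : Nat.gcd d1 r = 1) (h2 : Nat.gcd d2 r = 1) (m1 m2 : ℤ) :
    ∑ χ : DirichletCharacter ℂ r,
        χ ((d1 ^ 2 : ℕ) : ZMod r) * (starRingEnd ℂ) (χ ((d2 ^ 2 : ℕ) : ZMod r)) *
          gaussS r χ (1 : ZMod r) * gaussS r χ ((m1 ^ 2 : ℤ) : ZMod r) *
            gaussS r (χ.ringHomComp (starRingEnd ℂ)) (1 : ZMod r) *
              gaussS r (χ.ringHomComp (starRingEnd ℂ)) ((m2 ^ 2 : ℤ) : ZMod r) =
      (r.totient : ℂ) *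
        ∑ u ∈ (Finset.range r).filter (fun u => Nat.gcd u r = 1),
          ramanujanS r (((u : ℕ) : ZMod r) + ((m1 ^ 2 * (d2 : ℤ) ^ 2 : ℤ) : ZMod r)) *
            ramanujanS r (((u : ℕ) : ZMod r) + ((m2 ^ 2 * (d1 : ℤ) ^ 2 : ℤ) : ZMod r)) := by
  classical
  set M1 : ZMod r := ((m1 ^ 2 : ℤ) : ZMod r) with hM1
  set M2 : ZMod r := ((m2 ^ 2 : ℤ) : ZMod r) with hM2
  have hc1 : Nat.Coprime (d1 ^ 2) r := Nat.Coprime.pow_left 2 h1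
  have hc2 : Nat.Coprime (d2 ^ 2) r := Nat.Coprime.pow_left 2 h2
  set e1 : (ZMod r)ˣ := ZMod.unitOfCoprime (d1 ^ 2) hc1 with he1
  set e2 : (ZMod r)ˣ := ZMod.unitOfCoprime (d2 ^ 2) hc2 with he2
  have hv1 : (↑e1 : ZMod r) = ((d1 ^ 2 : ℕ) : ZMod r) := ZMod.coe_unitOfCoprime _ _
  have hv2 : (↑e2 : ZMod r) = ((d2 ^ 2 : ℕ) : ZMod r) := ZMod.coe_unitOfCoprime _ _
  set φ : ℂ := (r.totient : ℂ) with hφ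
  -- E : the additive-character part
  set E : (ZMod r)ˣ → (ZMod r)ˣ → (ZMod r)ˣ → (ZMod r)ˣ → ℂ := fun a b c d =>
    eZMod r (↑a * 1) * eZMod r (↑b * M1) * eZMod r (↑c * 1) * eZMod r (↑d * M2) with hE
  set A : ZMod r := ((m1 ^ 2 * (d2 : ℤ) ^ 2 : ℤ) : ZMod r) with hA'
  set B : ZMod r := ((m2 ^ 2 * (d1 : ℤ) ^ 2 : ℤ) : ZMod r) with hB'
  have hA : A = M1 * ↑e2 := by
    rw [hA', hM1, hv2]; push_cast; ring
  have hB : B = M2 * ↑e1 := by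
    rw [hB', hM2, hv1]; push_cast; ring
  -- Left side: expand, orthogonality, collapse
  have stepL : ∑ χ : DirichletCharacter ℂ r,
        χ ((d1 ^ 2 : ℕ) : ZMod r) * (starRingEnd ℂ) (χ ((d2 ^ 2 : ℕ) : ZMod r)) *
          gaussS r χ (1 : ZMod r) * gaussS r χ M1 *
            gaussS r (χ.ringHomComp (starRingEnd ℂ)) (1 : ZMod r) *
              gaussS r (χ.ringHomComp (starRingEnd ℂ)) M2
      = ∑ a : (ZMod r)ˣ, ∑ b : (ZMod r)ˣ, ∑ c : (ZMod r)ˣ,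
          φ * E (e1⁻¹ * (e2 * b * a) * c⁻¹) c b a := by
    have expand : ∀ χ : DirichletCharacter ℂ r,
        χ ((d1 ^ 2 : ℕ) : ZMod r) * (starRingEnd ℂ) (χ ((d2 ^ 2 : ℕ) : ZMod r)) *
          gaussS r χ (1 : ZMod r) * gaussS r χ M1 *
            gaussS r (χ.ringHomComp (starRingEnd ℂ)) (1 : ZMod r) *
              gaussS r (χ.ringHomComp (starRingEnd ℂ)) M2
        = ∑ a : (ZMod r)ˣ, ∑ b : (ZMod r)ˣ, ∑ c : (ZMod r)ˣ, ∑ d : (ZMod r)ˣ,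
            (χ ↑(e1 * d * c) * (starRingEnd ℂ) (χ ↑(e2 * b * a))) * E d c b a := by
      intro χ
      rw [gaussS_units, gaussS_units, gaussS_units, gaussS_units]
      simp only [Finset.mul_sum, Finset.sum_mul]
      refine Finset.sum_congr rfl fun a _ => ?_
      refine Finset.sum_congr rfl fun b _ => ?_
      refine Finset.sum_congr rfl fun c _ => ?_
      refine Finset.sum_congr rfl fun d _ => ?_
      simp only [MulChar.ringHomComp_apply, hE, Units.val_mul, hv1, hv2, map_mul, mul_one]
      ring
    rw [Finset.sum_congr rfl (fun χ _ => expand χ)]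
    rw [Finset.sum_comm]
    refine Finset.sum_congr rfl fun a _ => ?_
    rw [Finset.sum_comm]
    refine Finset.sum_congr rfl fun b _ => ?_
    rw [Finset.sum_comm]
    refine Finset.sum_congr rfl fun c _ => ?_
    rw [Finset.sum_comm]
    have inner : ∀ d : (ZMod r)ˣ,
        (∑ χ : DirichletCharacter ℂ r,
          (χ ↑(e1 * d * c) * (starRingEnd ℂ) (χ ↑(e2 * b * a))) * E d c b a)
        = if d = e1⁻¹ * (e2 * b * a) * c⁻¹ then φ * E d c b a else 0 := by
      intro d
      rw [← Finset.sum_mul, orth_units (e1 * d * c) (e2 * b * a)]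
      have hiff : (e1 * d * c = e2 * b * a) ↔ (d = e1⁻¹ * (e2 * b * a) * c⁻¹) := by
        constructor
        · intro h; rw [← h]; group
        · intro h; rw [h]; group
      by_cases h : e1 * d * c = e2 * b * a
      · rw [if_pos h, if_pos (hiff.mp h)]
      · rw [if_neg h, if_neg (fun hc => h (hiff.mpr hc)), zero_mul]
    rw [Finset.sum_congr rfl (fun d _ => inner d)]
    exact Fintype.sum_ite_eq' (e1⁻¹ * (e2 * b * a) * c⁻¹) (fun d => φ * E d c b a)
  -- Right side: expand Ramanujan sums
  have stepR : (r.totient : ℂ) *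
        ∑ u ∈ (Finset.range r).filter (fun u => Nat.gcd u r = 1),
          ramanujanS r (((u : ℕ) : ZMod r) + A) * ramanujanS r (((u : ℕ) : ZMod r) + B)
      = ∑ u : (ZMod r)ˣ, ∑ s : (ZMod r)ˣ, ∑ t : (ZMod r)ˣ,
          φ * (eZMod r (↑s * (↑u + A)) * eZMod r (↑t * (↑u + B))) := by
    rw [sum_filter_units r (fun x : ZMod r => ramanujanS r (x + A) * ramanujanS r (x + B))]
    rw [Finset.mul_sum]
    refine Finset.sum_congr rfl fun u _ => ?_
    rw [ramanujanS_units, ramanujanS_units, Finset.sum_mul_sum]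
    rw [Finset.mul_sum]
    refine Finset.sum_congr rfl fun s _ => ?_
    rw [Finset.mul_sum]
  rw [stepL, stepR]
  -- Reindex via the bijection (u, s, t) ↦ (a, b, c) = (e1*t, s*u, s*e2)
  have prodL : ∑ p : (ZMod r)ˣ × (ZMod r)ˣ × (ZMod r)ˣ,
        φ * E (e1⁻¹ * (e2 * p.2.1 * p.1) * p.2.2⁻¹) p.2.2 p.2.1 p.1
      = ∑ a : (ZMod r)ˣ, ∑ b : (ZMod r)ˣ, ∑ c : (ZMod r)ˣ,
          φ * E (e1⁻¹ * (e2 * b * a) * c⁻¹) c b a := by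
    rw [Fintype.sum_prod_type]
    exact Finset.sum_congr rfl fun a _ => by rw [Fintype.sum_prod_type]
  have prodR : ∑ p : (ZMod r)ˣ × (ZMod r)ˣ × (ZMod r)ˣ,
        φ * (eZMod r (↑p.2.1 * (↑p.1 + A)) * eZMod r (↑p.2.2 * (↑p.1 + B)))
      = ∑ u : (ZMod r)ˣ, ∑ s : (ZMod r)ˣ, ∑ t : (ZMod r)ˣ,
          φ * (eZMod r (↑s * (↑u + A)) * eZMod r (↑t * (↑u + B))) := by
    rw [Fintype.sum_prod_type]
    exact Finset.sum_congr rfl fun u _ => by rw [Fintype.sum_prod_type]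
  rw [← prodL, ← prodR]
  refine (Fintype.sum_equiv ⟨fun p => (e1 * p.2.2, p.2.1 * p.1, p.2.1 * e2),
    fun q => (e2 * q.2.2⁻¹ * q.2.1, q.2.2 * e2⁻¹, e1⁻¹ * q.1), ?_, ?_⟩ _ _ ?_).symm
  · intro p
    refine Prod.ext ?_ (Prod.ext ?_ ?_) <;> simp only <;>
      first
        | group
        | (rw [mul_inv_rev]; simp [mul_comm, mul_left_comm, mul_assoc])
        | simp [mul_comm, mul_left_comm, mul_assoc]
  · intro q
    refine Prod.ext ?_ (Prod.ext ?_ ?_) <;> simp only <;>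
      first
        | group
        | (rw [mul_inv_rev]; simp [mul_comm, mul_left_comm, mul_assoc])
        | simp [mul_comm, mul_left_comm, mul_assoc]
  · rintro ⟨u, s, t⟩
    simp only [Equiv.coe_fn_mk]
    have hd0 : e1⁻¹ * (e2 * (s * u) * (e1 * t)) * (s * e2)⁻¹ = t * u := by
      rw [eq_comm, eq_mul_inv_iff_mul_eq, eq_comm, inv_mul_eq_iff_eq_mul]
      simp [mul_comm, mul_left_comm, mul_assoc]
    rw [hd0]
    have hs : (↑s : ZMod r) * (↑u + A) = ↑(s * u) * 1 + ↑(s * e2) * M1 := by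
      rw [hA]; push_cast [Units.val_mul]; ring
    have ht : (↑t : ZMod r) * (↑u + B) = ↑(t * u) * 1 + ↑(e1 * t) * M2 := by
      rw [hB]; push_cast [Units.val_mul]; ring
    rw [hs, ht, eZMod_add, eZMod_add]
    simp only [hE]
    ring
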